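/- Let P(T) ∈ ℤ[T] be an irreducible polynomial of degree 2g with reciprocal roots α₁, …, α_{2g} (so P(T) = ∏(1 − α_i T)), and for n ≥ 1 define P_n(T) = ∏(1 − α_i^n T). Then P_n(T) is irreducible over ℚ for all n ≥ 1 if and only if for all i ≠ j the quotient α_i/α_j is not a root of unity. -/

import Mathlib

open Polynomial IntermediateField

/-- Let `P(T) ∈ ℚ[T]` be irreducible of degree `2g` with reciprocal
roots `α₁, …, α_{2g}` (so `P(T) = ∏ (1 − αᵢ T)` over `ℂ`), and for `n ≥ 1` let
`P_n(T) = ∏ (1 − αᵢⁿ T)`.  Then `P_n` is irreducible over `ℚ` for all `n ≥ 1` iff for all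
`i ≠ j` the quotient `αᵢ/αⱼ` is not a root of unity. -/
theorem stably_irreducible_iff_no_root_of_unity_quotient
    (g : ℕ) (hg : 0 < g) (P : Polynomial ℚ) (hirr : Irreducible P)
    (hdeg : P.natDegree = 2 * g)
    (α : Fin (2 * g) → ℂ) (hα : ∀ i, α i ≠ 0)
    (hfact : P.map (algebraMap ℚ ℂ) = ∏ i, (1 - C (α i) * X)) :
    (∀ n : ℕ, 1 ≤ n → ∃ Pn : Polynomial ℚ,
        Pn.map (algebraMap ℚ ℂ) = ∏ i, (1 - C (α i ^ n) * X) ∧ Irreducible Pn) ↔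
    (∀ i j, i ≠ j → ¬ ∃ k : ℕ, 0 < k ∧ (α i / α j) ^ k = 1) := by
  constructor
  · intro h
    rintro i j hij ⟨k, hk, hq⟩
    obtain ⟨Pk, hmap, hPkirr⟩ := h k hk
    have heq : α i ^ k = α j ^ k := by
      rw [div_pow, div_eq_one_iff_eq (pow_ne_zero _ (hα j))] at hq
      exact hq
    have hsq : Squarefree (Pk.map (algebraMap ℚ ℂ)) :=
      (hPkirr.separable.map).squarefree
    set f : Fin (2 * g) → ℂ[X] := fun l => 1 - C (α l ^ k) * X with hf
    have hdvd : f i * f i ∣ ∏ l, f l := by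
      have h1 : ∏ l, f l = f i * ∏ l ∈ Finset.univ.erase i, f l :=
        (Finset.mul_prod_erase Finset.univ f (Finset.mem_univ i)).symm
      have hjmem : j ∈ Finset.univ.erase i := Finset.mem_erase.mpr ⟨fun h' => hij h'.symm, Finset.mem_univ j⟩
      have h2 : ∏ l ∈ Finset.univ.erase i, f l
          = f j * ∏ l ∈ (Finset.univ.erase i).erase j, f l :=
        (Finset.mul_prod_erase _ f hjmem).symm
      have hfij : f j = f i := by simp only [hf]; rw [heq]
      rw [h1, h2, hfij, ← mul_assoc]
      exact Dvd.intro _ rfl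
    have hunit : IsUnit (f i) := hsq _ (hmap ▸ hdvd)
    obtain ⟨r, -, hr⟩ := Polynomial.isUnit_iff.mp hunit
    have hc := congrArg (fun p => Polynomial.coeff p 1) hr
    simp only [hf, coeff_C, coeff_sub, coeff_one, coeff_C_mul, coeff_X_one] at hc
    norm_num at hc
    exact hα i hc.1
  · intro hroots n hn
    have hP0 : P ≠ 0 := hirr.ne_zero
    set γ : Fin (2 * g) → ℂ := fun i => (α i)⁻¹ with hγ
    have hγ0 : ∀ i, γ i ≠ 0 := fun i => inv_ne_zero (hα i)
    -- distinctness of the γ i ^ n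
    have hinj : Function.Injective (fun i => γ i ^ n) := by
      intro i j hij
      by_contra hne
      refine hroots i j hne ⟨n, hn, ?_⟩
      simp only [hγ] at hij
      rw [div_pow, div_eq_one_iff_eq (pow_ne_zero _ (hα j))]
      rw [inv_pow, inv_pow] at hij
      exact inv_injective hij
    -- each γ i is a root of P over ℂ
    have haev : ∀ i, aeval (γ i) P = 0 := by
      intro i
      rw [aeval_def, ← eval_map, hfact]
      rw [eval_prod]
      refine Finset.prod_eq_zero (Finset.mem_univ i) ?_
      simp [hγ, mul_inv_cancel₀ (hα i)]
    have hint : ∀ i, IsIntegral ℚ (γ i) :=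
      fun i => (isAlgebraic_iff_isIntegral.mp ⟨P, hP0, haev i⟩)
    have h2g : 0 < 2 * g := by omega
    set i0 : Fin (2 * g) := ⟨0, h2g⟩
    -- P is associated to the minimal polynomial of γ i0
    have hassoc : Associated (minpoly ℚ (γ i0)) P :=
      (minpoly.irreducible (hint i0)).associated_of_dvd hirr (minpoly.dvd ℚ _ (haev i0))
    -- transfer: any rational polynomial vanishing at γ i0 ^ n vanishes at all γ i ^ n
    have htrans : ∀ m : ℚ[X], aeval (γ i0 ^ n) m = 0 → ∀ i, aeval (γ i ^ n) m = 0 := by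
      intro m hm i
      have hw : aeval (γ i0) (m.comp (X ^ n)) = 0 := by
        rw [aeval_comp]; simpa using hm
      have hPd : P ∣ m.comp (X ^ n) := hassoc.symm.dvd.trans (minpoly.dvd ℚ _ hw)
      obtain ⟨q, hq⟩ := hPd
      have : aeval (γ i) (m.comp (X ^ n)) = 0 := by
        rw [hq, map_mul, haev i, zero_mul]
      rwa [aeval_comp, map_pow, aeval_X] at this
    -- the minimal polynomial of γ i0 ^ n
    have hintn : IsIntegral ℚ (γ i0 ^ n) := (hint i0).pow n
    set Mn : ℚ[X] := minpoly ℚ (γ i0 ^ n) with hMn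
    -- degree bound from field theory
    have hfin : FiniteDimensional ℚ ℚ⟮γ i0⟯ :=
      IntermediateField.adjoin.finiteDimensional (hint i0)
    have hle : Mn.natDegree ≤ 2 * g := by
      have hmem : γ i0 ^ n ∈ ℚ⟮γ i0⟯ :=
        pow_mem (IntermediateField.mem_adjoin_simple_self ℚ (γ i0)) n
      have he : minpoly ℚ ((⟨γ i0 ^ n, hmem⟩ : ℚ⟮γ i0⟯)) = Mn := by
        rw [hMn, ← minpoly.algebraMap_eq (algebraMap ℚ⟮γ i0⟯ ℂ).injective]
        rfl
      calc Mn.natDegree = (minpoly ℚ ((⟨γ i0 ^ n, hmem⟩ : ℚ⟮γ i0⟯))).natDegree := by rw [he]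
        _ ≤ Module.finrank ℚ ℚ⟮γ i0⟯ := minpoly.natDegree_le _
        _ = (minpoly ℚ (γ i0)).natDegree := IntermediateField.adjoin.finrank (hint i0)
        _ = P.natDegree := natDegree_eq_of_degree_eq (degree_eq_degree_of_associated hassoc)
        _ = 2 * g := hdeg
    -- Mn over ℂ equals ∏ (X - γ i ^ n)
    have hMnmono : Mn.Monic := minpoly.monic hintn
    have hmm : (Mn.map (algebraMap ℚ ℂ)).Monic := hMnmono.map _
    have hMnmap : Mn.map (algebraMap ℚ ℂ) = ∏ i, (X - C (γ i ^ n)) := by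
      have hrm : ∀ i, (γ i ^ n) ∈ (Mn.map (algebraMap ℚ ℂ)).roots := by
        intro i
        rw [mem_roots hmm.ne_zero]
        have := htrans Mn (minpoly.aeval ℚ _) i
        rwa [aeval_def, ← eval_map] at this
      set S : Multiset ℂ := Finset.univ.val.map (fun i => γ i ^ n) with hS
      have hSnodup : S.Nodup := Finset.univ.nodup.map hinj
      have hSle : S ≤ (Mn.map (algebraMap ℚ ℂ)).roots := by
        rw [Multiset.le_iff_subset hSnodup]
        intro x hx
        obtain ⟨i, -, rfl⟩ := Multiset.mem_map.mp hx
        exact hrm i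
      have hcard : Multiset.card ((Mn.map (algebraMap ℚ ℂ)).roots) ≤ 2 * g := by
        refine (Polynomial.card_roots' _).trans ?_
        rw [natDegree_map]
        exact hle
      have hScard : Multiset.card S = 2 * g := by simp [hS]
      have hSeq : S = (Mn.map (algebraMap ℚ ℂ)).roots :=
        Multiset.eq_of_le_of_card_le hSle (hcard.trans_eq hScard.symm)
      have hsplit := (IsAlgClosed.splits _).eq_prod_roots_of_monic hmm
      rw [hsplit, ← hSeq, hS, Multiset.map_map]
      rfl
    -- define Pn
    set c : ℚ := P.leadingCoeff with hc
    have hc0 : c ≠ 0 := leadingCoeff_ne_zero.mpr hP0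
    -- the image of c is ∏ (-(α i))
    have hcim : (algebraMap ℚ ℂ) c = ∏ i, (-(α i)) := by
      have h1 : (P.map (algebraMap ℚ ℂ)).leadingCoeff = (algebraMap ℚ ℂ) c := by
        rw [hc, leadingCoeff_map]
      rw [← h1, hfact, leadingCoeff_prod]
      refine Finset.prod_congr rfl ?_
      intro i _
      have h2 : (1 : ℂ[X]) - C (α i) * X = C (-(α i)) * X + C 1 := by
        rw [map_neg, map_one]; ring
      rw [h2, leadingCoeff_linear (by simpa using hα i)]
    refine ⟨C (c ^ n) * Mn, ?_, ?_⟩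
    · -- the map equation
      rw [Polynomial.map_mul, map_C, hMnmap, map_pow, hcim]
      have key : ∀ i : Fin (2 * g), (1 : ℂ[X]) - C (α i ^ n) * X
          = C (-(α i ^ n)) * (X - C (γ i ^ n)) := by
        intro i
        have h1 : α i ^ n * γ i ^ n = 1 := by
          simp only [hγ]
          rw [← mul_pow, mul_inv_cancel₀ (hα i), one_pow]
        calc (1 : ℂ[X]) - C (α i ^ n) * X
            = C (α i ^ n * γ i ^ n) - C (α i ^ n) * X := by rw [h1, map_one]
          _ = C (-(α i ^ n)) * (X - C (γ i ^ n)) := by rw [map_neg, C_mul]; ring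
      have e1 : ∀ (f : Fin (2 * g) → ℂ), (∏ i, -f i) = ∏ i, f i := by
        intro f
        calc ∏ i, -f i = ∏ i, ((-1 : ℂ) * f i) := by
              refine Finset.prod_congr rfl fun i _ => by ring
          _ = (∏ _i : Fin (2 * g), (-1 : ℂ)) * ∏ i, f i := Finset.prod_mul_distrib
          _ = ∏ i, f i := by
              rw [Finset.prod_const, Finset.card_univ, Fintype.card_fin,
                Even.neg_one_pow ⟨g, by ring⟩, one_mul]
      have hsgn : ((∏ i, -α i) ^ n) = ∏ i, (-(α i ^ n)) := by
        rw [e1 α, e1 fun i => α i ^ n, ← Finset.prod_pow]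
      calc C ((∏ i, -α i) ^ n) * ∏ i, (X - C (γ i ^ n))
          = (∏ i, C (-(α i ^ n))) * ∏ i, (X - C (γ i ^ n)) := by
            rw [hsgn, map_prod]
        _ = ∏ i, (C (-(α i ^ n)) * (X - C (γ i ^ n))) := (Finset.prod_mul_distrib).symm
        _ = ∏ i, (1 - C (α i ^ n) * X) := Finset.prod_congr rfl fun i _ => (key i).symm
    · -- irreducibility
      have hu : IsUnit (C (c ^ n) : ℚ[X]) :=
        isUnit_C.mpr (isUnit_iff_ne_zero.mpr (pow_ne_zero n hc0))
      have hA : Associated Mn (C (c ^ n) * Mn) := ⟨hu.unit, by rw [hu.unit_spec, mul_comm]⟩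
      exact hA.irreducible (minpoly.irreducible hintn)
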